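/- For any bipartite state ρ_{AB} on finite-dimensional Hilbert spaces and any extension ω_{ABE} of ρ_{AB} (i.e., Tr_E ω_{ABE} = ρ_{AB}), the conditional mutual information satisfies (1/2) I(A;B|E)_ω ≤ min{H(A)_ρ, H(B)_ρ}. Consequently the puffed entanglement E_puff(A;B)_ρ := (1/2) sup_ω I(A;B|E)_ω is at most min{H(A)_ρ, H(B)_ρ}. -/

import Mathlib

open Matrix
open scoped Kronecker Classical ComplexOrder

noncomputable section

/-- A density matrix: positive semidefinite with unit trace. -/
def IsState {n : Type*} [Fintype n] (ρ : Matrix n n ℂ) : Prop :=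
  ρ.PosSemidef ∧ ρ.trace = 1

def IsUnitaryM {n : Type*} [Fintype n] [DecidableEq n] (U : Matrix n n ℂ) : Prop :=
  U * Uᴴ = 1 ∧ Uᴴ * U = 1

/-- Von Neumann entropy, via the eigenvalues of a Hermitian matrix. -/
noncomputable def vN {n : Type*} [Fintype n] [DecidableEq n] (ρ : Matrix n n ℂ) : ℝ :=
  if h : ρ.IsHermitian then ∑ i, Real.negMulLog (h.eigenvalues i) else 0

/-- Partial trace over the second tensor factor. -/
def ptR {a b : Type*} [Fintype a] [Fintype b] (ρ : Matrix (a × b) (a × b) ℂ) :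
    Matrix a a ℂ := Matrix.of fun i j => ∑ k, ρ (i, k) (j, k)

/-- Partial trace over the first tensor factor. -/
def ptL {a b : Type*} [Fintype a] [Fintype b] (ρ : Matrix (a × b) (a × b) ℂ) :
    Matrix b b ℂ := Matrix.of fun i j => ∑ k, ρ (k, i) (k, j)

/-- Quantum mutual information I(A;B) of a bipartite state. -/
noncomputable def MI {a b : Type*} [Fintype a] [Fintype b] [DecidableEq a] [DecidableEq b]
    (ρ : Matrix (a × b) (a × b) ℂ) : ℝ :=
  vN (ptR ρ) + vN (ptL ρ) - vN ρ

/-- Marginal on the first two factors of a tripartite state on `a × (b × c)`. -/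
def mAB {a b c : Type*} [Fintype a] [Fintype b] [Fintype c]
    (ρ : Matrix (a × b × c) (a × b × c) ℂ) : Matrix (a × b) (a × b) ℂ :=
  Matrix.of fun i j => ∑ k, ρ (i.1, (i.2, k)) (j.1, (j.2, k))

/-- Marginal on the middle factor of a tripartite state on `a × (b × c)`. -/
def mB {a b c : Type*} [Fintype a] [Fintype b] [Fintype c]
    (ρ : Matrix (a × b × c) (a × b × c) ℂ) : Matrix b b ℂ :=
  Matrix.of fun i j => ∑ x : a, ∑ k : c, ρ (x, (i, k)) (x, (j, k))

/-- Marginal on the outer factors of a tripartite state on `a × (b × c)`. -/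
def mOuter {a b c : Type*} [Fintype a] [Fintype b] [Fintype c]
    (ρ : Matrix (a × b × c) (a × b × c) ℂ) : Matrix (a × c) (a × c) ℂ :=
  Matrix.of fun i j => ∑ k : b, ρ (i.1, (k, i.2)) (j.1, (k, j.2))

/-- Quantum conditional mutual information I(A;C|B) of a state on `a × (b × c)`:
`H(AB) + H(BC) - H(B) - H(ABC)`. -/
noncomputable def CMI {a b c : Type*} [Fintype a] [Fintype b] [Fintype c]
    [DecidableEq a] [DecidableEq b] [DecidableEq c]
    (ρ : Matrix (a × b × c) (a × b × c) ℂ) : ℝ :=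
  vN (mAB ρ) + vN (ptL ρ) - vN (mB ρ) - vN ρ

open Polynomial

/-! ### Auxiliary lemmas -/

section Charpoly

variable {m n : Type*} [Fintype m] [Fintype n] [DecidableEq m] [DecidableEq n]

lemma eval_charpoly' (M : Matrix n n ℂ) (x : ℂ) :
    (M.charpoly).eval x = (x • (1 : Matrix n n ℂ) - M).det := by
  rw [Matrix.charpoly, ← Polynomial.coe_evalRingHom, RingHom.map_det]
  congr 1
  ext i j
  by_cases h : i = j <;>
    simp [h, Matrix.charmatrix_apply_eq, Matrix.charmatrix_apply_ne, Matrix.one_apply,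
      Matrix.smul_apply]

lemma charpoly_mul_comm_pow (A : Matrix m n ℂ) (B : Matrix n m ℂ) :
    X ^ (Fintype.card n) * (A * B).charpoly = X ^ (Fintype.card m) * (B * A).charpoly := by
  apply Polynomial.eq_of_infinite_eval_eq
  apply Set.Infinite.mono (s := {(0:ℂ)}ᶜ)
  swap
  · exact Set.Finite.infinite_compl (Set.finite_singleton 0)
  intro x hx
  have hx0 : x ≠ 0 := hx
  simp only [Set.mem_setOf_eq, eval_mul, eval_pow, eval_X, eval_charpoly']
  have hinv : Invertible (x • (1 : Matrix m m ℂ)) := by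
    refine ⟨x⁻¹ • (1 : Matrix m m ℂ), ?_, ?_⟩
    · rw [Matrix.smul_mul, Matrix.mul_smul, one_mul, smul_smul, inv_mul_cancel₀ hx0, one_smul]
    · rw [Matrix.smul_mul, Matrix.mul_smul, one_mul, smul_smul, mul_inv_cancel₀ hx0, one_smul]
  have h1 : (Matrix.fromBlocks (x • (1 : Matrix m m ℂ)) A B (1 : Matrix n n ℂ)).det
      = (x • (1 : Matrix m m ℂ) - A * B).det := by
    rw [Matrix.det_fromBlocks_one₂₂]
  have h2 : (Matrix.fromBlocks (x • (1 : Matrix m m ℂ)) A B (1 : Matrix n n ℂ)).det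
      = x ^ (Fintype.card m) * ((1 : Matrix n n ℂ) - x⁻¹ • (B * A)).det := by
    rw [Matrix.det_fromBlocks₁₁]
    congr 1
    · simp [Matrix.det_smul]
    · congr 1
      have : ⅟ (x • (1 : Matrix m m ℂ)) = x⁻¹ • (1 : Matrix m m ℂ) := by
        refine invOf_eq_right_inv ?_
        simp [smul_smul, mul_inv_cancel₀ hx0, inv_mul_cancel₀ hx0]
      rw [this]
      simp [Matrix.mul_smul, Matrix.smul_mul]
  have h3 : (x • (1 : Matrix n n ℂ) - B * A).det
      = x ^ (Fintype.card n) * ((1 : Matrix n n ℂ) - x⁻¹ • (B * A)).det := by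
    have : x • ((1 : Matrix n n ℂ) - x⁻¹ • (B * A)) = x • (1 : Matrix n n ℂ) - B * A := by
      rw [smul_sub, smul_smul, mul_inv_cancel₀ hx0, one_smul]
    rw [← this, Matrix.det_smul]
  rw [h3, ← h1, h2]
  ring

lemma charpoly_unitary_conj (U D : Matrix n n ℂ) (hU : U * Uᴴ = 1) :
    (U * D * Uᴴ).charpoly = D.charpoly := by
  apply Polynomial.funext
  intro x
  rw [eval_charpoly', eval_charpoly']
  have key : x • (1 : Matrix n n ℂ) - U * D * Uᴴ = U * (x • (1 : Matrix n n ℂ) - D) * Uᴴ := by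
    rw [Matrix.mul_sub, Matrix.sub_mul, Matrix.mul_smul, Matrix.smul_mul, mul_one, hU]
  rw [key, Matrix.det_mul, Matrix.det_mul]
  have hdet : U.det * Uᴴ.det = 1 := by rw [← Matrix.det_mul, hU, Matrix.det_one]
  calc U.det * (x • (1 : Matrix n n ℂ) - D).det * Uᴴ.det
      = (U.det * Uᴴ.det) * (x • (1 : Matrix n n ℂ) - D).det := by ring
    _ = (x • (1 : Matrix n n ℂ) - D).det := by rw [hdet, one_mul]

lemma charpoly_diagonal' (d : n → ℂ) :
    (Matrix.diagonal d).charpoly = ∏ i, (X - C (d i)) := by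
  apply Polynomial.funext
  intro x
  rw [eval_charpoly']
  have : x • (1 : Matrix n n ℂ) - Matrix.diagonal d = Matrix.diagonal (fun i => x - d i) := by
    ext i j
    by_cases h : i = j <;> simp [h, Matrix.one_apply, Matrix.diagonal]
  rw [this, Matrix.det_diagonal, Polynomial.eval_prod]
  simp

lemma roots_charpoly_hermitian {M : Matrix n n ℂ} (hM : M.IsHermitian) :
    M.charpoly.roots = Finset.univ.val.map (fun i => ((hM.eigenvalues i : ℝ) : ℂ)) := by
  have hU : (hM.eigenvectorUnitary : Matrix n n ℂ) * (hM.eigenvectorUnitary : Matrix n n ℂ)ᴴ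
      = 1 := by
    simpa [Matrix.star_eq_conjTranspose] using
      Matrix.mem_unitaryGroup_iff.mp (hM.eigenvectorUnitary).2
  have hchar : M.charpoly
      = (Matrix.diagonal (RCLike.ofReal ∘ hM.eigenvalues) : Matrix n n ℂ).charpoly := by
    conv_lhs => rw [hM.spectral_theorem]
    have := charpoly_unitary_conj (hM.eigenvectorUnitary : Matrix n n ℂ)
      (Matrix.diagonal (RCLike.ofReal ∘ hM.eigenvalues)) hU
    simpa [Matrix.star_eq_conjTranspose] using this
  rw [hchar, charpoly_diagonal', Finset.prod_eq_multiset_prod]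
  have hco : (fun i => X - C ((RCLike.ofReal ∘ hM.eigenvalues) i))
      = (fun a : ℂ => X - C a) ∘ (fun i => ((hM.eigenvalues i : ℝ) : ℂ)) := rfl
  rw [hco, ← Multiset.map_map (fun a : ℂ => X - C a), roots_multiset_prod_X_sub_C]

lemma vN_eq_sum_roots {M : Matrix n n ℂ} (hM : M.IsHermitian) :
    vN M = (M.charpoly.roots.map (fun z => Real.negMulLog z.re)).sum := by
  rw [vN, dif_pos hM, roots_charpoly_hermitian hM, Multiset.map_map, Finset.sum]
  simp [Function.comp]

lemma vN_eq_of_charpoly_eq {M : Matrix m m ℂ} {N : Matrix n n ℂ}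
    (hM : M.IsHermitian) (hN : N.IsHermitian)
    (h : M.charpoly = N.charpoly) : vN M = vN N := by
  rw [vN_eq_sum_roots hM, vN_eq_sum_roots hN, h]

lemma charpoly_transpose' (M : Matrix n n ℂ) : Mᵀ.charpoly = M.charpoly := by
  apply Polynomial.funext
  intro x
  rw [eval_charpoly', eval_charpoly']
  have : x • (1 : Matrix n n ℂ) - Mᵀ = (x • (1 : Matrix n n ℂ) - M)ᵀ := by
    rw [Matrix.transpose_sub, Matrix.transpose_smul, Matrix.transpose_one]
  rw [this, Matrix.det_transpose]

lemma vN_transpose (M : Matrix n n ℂ) : vN Mᵀ = vN M := by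
  by_cases h : M.IsHermitian
  · exact vN_eq_of_charpoly_eq h.transpose h (charpoly_transpose' M)
  · have hT : ¬ Mᵀ.IsHermitian := fun hh => h (by simpa using hh.transpose)
    simp only [vN, dif_neg h, dif_neg hT]

lemma vN_diagonal_real (d : n → ℝ) :
    vN (Matrix.diagonal (fun i => ((d i : ℝ) : ℂ))) = ∑ i, Real.negMulLog (d i) := by
  have hH : (Matrix.diagonal (fun i => ((d i : ℝ) : ℂ))).IsHermitian := by
    rw [Matrix.IsHermitian, Matrix.diagonal_conjTranspose]
    have : (star fun i => ((d i : ℝ) : ℂ)) = fun i => ((d i : ℝ) : ℂ) :=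
      funext fun i => Complex.conj_ofReal (d i)
    rw [this]
  rw [vN_eq_sum_roots hH]
  have : (Matrix.diagonal (fun i => ((d i : ℝ) : ℂ))).charpoly.roots
      = Finset.univ.val.map (fun i => ((d i : ℝ) : ℂ)) := by
    rw [charpoly_diagonal', Finset.prod_eq_multiset_prod]
    have hco : (fun i => X - C (((d i : ℝ)) : ℂ))
        = (fun a : ℂ => X - C a) ∘ (fun i => ((d i : ℝ) : ℂ)) := rfl
    rw [hco, ← Multiset.map_map (fun a : ℂ => X - C a), roots_multiset_prod_X_sub_C]
  rw [this, Multiset.map_map, Finset.sum]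
  simp [Function.comp]

lemma sum_negMulLog_roots_X_pow_mul (k : ℕ) (p : Polynomial ℂ) (hp : p ≠ 0) :
    ((X ^ k * p).roots.map (fun z : ℂ => Real.negMulLog z.re)).sum
      = (p.roots.map (fun z : ℂ => Real.negMulLog z.re)).sum := by
  rw [Polynomial.roots_mul (mul_ne_zero (pow_ne_zero _ Polynomial.X_ne_zero) hp),
    Polynomial.roots_pow, Polynomial.roots_X, Multiset.map_add, Multiset.sum_add,
    Multiset.nsmul_singleton]
  simp [Multiset.map_replicate, Multiset.sum_replicate]

lemma vN_conjTranspose_mul_self_comm (A : Matrix m n ℂ) : vN (Aᴴ * A) = vN (A * Aᴴ) := by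
  have h1 : (Aᴴ * A).IsHermitian := (Matrix.posSemidef_conjTranspose_mul_self A).1
  have h2 : (A * Aᴴ).IsHermitian := (Matrix.posSemidef_self_mul_conjTranspose A).1
  have hcp := charpoly_mul_comm_pow Aᴴ A
  have hne1 : (Aᴴ * A).charpoly ≠ 0 := (Matrix.charpoly_monic _).ne_zero
  have hne2 : (A * Aᴴ).charpoly ≠ 0 := (Matrix.charpoly_monic _).ne_zero
  rw [vN_eq_sum_roots h1, vN_eq_sum_roots h2,
    ← sum_negMulLog_roots_X_pow_mul (Fintype.card m) _ hne1,
    ← sum_negMulLog_roots_X_pow_mul (Fintype.card n) _ hne2, hcp]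

lemma vN_submatrix {e : m ≃ n} (M : Matrix n n ℂ) : vN (M.submatrix e e) = vN M := by
  by_cases h : M.IsHermitian
  · have hs : (M.submatrix e e).IsHermitian := (Matrix.isHermitian_submatrix_equiv e).mpr h
    refine vN_eq_of_charpoly_eq hs h ?_
    have : M.submatrix e e = Matrix.reindex e.symm e.symm M := rfl
    rw [this, Matrix.charpoly_reindex]
  · have hs : ¬ (M.submatrix e e).IsHermitian :=
      fun hh => h ((Matrix.isHermitian_submatrix_equiv e).mp hh)
    simp only [vN, dif_neg h, dif_neg hs]

end Charpoly

section Marginals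

variable {a b : Type*} [Fintype a] [Fintype b] [DecidableEq a] [DecidableEq b]

lemma posSemidef_add {N : Type*} [Fintype N] {A B : Matrix N N ℂ}
    (hA : A.PosSemidef) (hB : B.PosSemidef) : (A + B).PosSemidef := by
  refine ⟨hA.1.add hB.1, fun x => ?_⟩
  exact (hA.add hB).2 x

lemma posSemidef_sum {ι N : Type*} [Fintype ι] [Fintype N] (f : ι → Matrix N N ℂ)
    (h : ∀ i, (f i).PosSemidef) : (∑ i, f i).PosSemidef :=
  Finset.sum_induction f Matrix.PosSemidef (fun _ _ ha hb => posSemidef_add ha hb)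
    (Matrix.PosSemidef.zero) (fun i _ => h i)

private def eR (k : b) : Matrix a (a × b) ℂ := Matrix.of fun i p => if p = (i, k) then 1 else 0

private def eL (k : a) : Matrix b (a × b) ℂ := Matrix.of fun j p => if p = (k, j) then 1 else 0

lemma ptR_eq_sum (ρ : Matrix (a × b) (a × b) ℂ) :
    ptR ρ = ∑ k : b, eR (a := a) k * ρ * (eR (a := a) k)ᴴ := by
  ext i j
  rw [Matrix.sum_apply]
  have hterm : ∀ k : b, (eR (a := a) k * ρ * (eR (a := a) k)ᴴ) i j = ρ (i,k) (j,k) := by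
    intro k
    rw [Matrix.mul_apply]
    have h1 : ∀ q, (eR (a := a) k * ρ) i q * (eR (a := a) k)ᴴ q j
        = if q = (j,k) then (eR (a := a) k * ρ) i q else 0 := by
      intro q
      rw [Matrix.conjTranspose_apply]
      simp only [eR, Matrix.of_apply]
      by_cases h : q = (j,k) <;> simp [h]
    rw [Finset.sum_congr rfl fun q _ => h1 q, Finset.sum_ite_eq' Finset.univ ((j,k))]
    simp only [Finset.mem_univ, if_true, Matrix.mul_apply]
    have h2 : ∀ p, eR (a := a) k i p * ρ p (j,k) = if p = (i,k) then ρ p (j,k) else 0 := by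
      intro p
      simp only [eR, Matrix.of_apply]
      by_cases h : p = (i,k) <;> simp [h]
    rw [Finset.sum_congr rfl fun p _ => h2 p, Finset.sum_ite_eq' Finset.univ ((i,k))]
    simp
  rw [Finset.sum_congr rfl fun k _ => hterm k]
  simp [ptR]

lemma ptL_eq_sum (ρ : Matrix (a × b) (a × b) ℂ) :
    ptL ρ = ∑ k : a, eL (b := b) k * ρ * (eL (b := b) k)ᴴ := by
  ext i j
  rw [Matrix.sum_apply]
  have hterm : ∀ k : a, (eL (b := b) k * ρ * (eL (b := b) k)ᴴ) i j = ρ (k,i) (k,j) := by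
    intro k
    rw [Matrix.mul_apply]
    have h1 : ∀ q, (eL (b := b) k * ρ) i q * (eL (b := b) k)ᴴ q j
        = if q = (k,j) then (eL (b := b) k * ρ) i q else 0 := by
      intro q
      rw [Matrix.conjTranspose_apply]
      simp only [eL, Matrix.of_apply]
      by_cases h : q = (k,j) <;> simp [h]
    rw [Finset.sum_congr rfl fun q _ => h1 q, Finset.sum_ite_eq' Finset.univ ((k,j))]
    simp only [Finset.mem_univ, if_true, Matrix.mul_apply]
    have h2 : ∀ p, eL (b := b) k i p * ρ p (k,j) = if p = (k,i) then ρ p (k,j) else 0 := by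
      intro p
      simp only [eL, Matrix.of_apply]
      by_cases h : p = (k,i) <;> simp [h]
    rw [Finset.sum_congr rfl fun p _ => h2 p, Finset.sum_ite_eq' Finset.univ ((k,i))]
    simp
  rw [Finset.sum_congr rfl fun k _ => hterm k]
  simp [ptL]

lemma psd_ptR {ρ : Matrix (a × b) (a × b) ℂ} (h : ρ.PosSemidef) : (ptR ρ).PosSemidef := by
  rw [ptR_eq_sum]
  exact posSemidef_sum _ fun k => h.mul_mul_conjTranspose_same (eR k)

lemma psd_ptL {ρ : Matrix (a × b) (a × b) ℂ} (h : ρ.PosSemidef) : (ptL ρ).PosSemidef := by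
  rw [ptL_eq_sum]
  exact posSemidef_sum _ fun k => h.mul_mul_conjTranspose_same (eL k)

lemma trace_ptR (ρ : Matrix (a × b) (a × b) ℂ) : (ptR ρ).trace = ρ.trace := by
  simp [Matrix.trace, ptR, Fintype.sum_prod_type, Matrix.diag]

lemma trace_ptL (ρ : Matrix (a × b) (a × b) ℂ) : (ptL ρ).trace = ρ.trace := by
  rw [Matrix.trace, Matrix.trace, Fintype.sum_prod_type, Finset.sum_comm]
  simp [ptL, Matrix.diag]

end Marginals

section Purify

variable {N : Type*} [Fintype N] [DecidableEq N]

lemma purify {ω : Matrix N N ℂ} (hpos : ω.PosSemidef) :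
    ∃ P : Matrix N N ℂ, P * Pᴴ = ω ∧
      Pᴴ * P = Matrix.diagonal (fun i => ((hpos.1.eigenvalues i : ℝ) : ℂ)) := by
  set U := (hpos.1.eigenvectorUnitary : Matrix N N ℂ) with hUdef
  set D := Matrix.diagonal (fun i => ((Real.sqrt (hpos.1.eigenvalues i) : ℝ) : ℂ)) with hDdef
  have hDstar : Dᴴ = D := by
    rw [hDdef, Matrix.diagonal_conjTranspose]
    have : (star fun i => ((Real.sqrt (hpos.1.eigenvalues i) : ℝ) : ℂ))
        = fun i => ((Real.sqrt (hpos.1.eigenvalues i) : ℝ) : ℂ) :=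
      funext fun i => Complex.conj_ofReal _
    rw [this]
  have hDD : D * D = Matrix.diagonal (fun i => ((hpos.1.eigenvalues i : ℝ) : ℂ)) := by
    rw [hDdef, Matrix.diagonal_mul_diagonal]
    have : (fun i => ((Real.sqrt (hpos.1.eigenvalues i) : ℝ) : ℂ)
          * ((Real.sqrt (hpos.1.eigenvalues i) : ℝ) : ℂ))
        = fun i => ((hpos.1.eigenvalues i : ℝ) : ℂ) := by
      funext i
      rw [← Complex.ofReal_mul, Real.mul_self_sqrt (hpos.eigenvalues_nonneg i)]
    rw [this]
  have hU1 : U * Uᴴ = 1 := by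
    simpa [Matrix.star_eq_conjTranspose] using
      Matrix.mem_unitaryGroup_iff.mp (hpos.1.eigenvectorUnitary).2
  have hU2 : Uᴴ * U = 1 := by
    simpa [Matrix.star_eq_conjTranspose] using
      Matrix.mem_unitaryGroup_iff'.mp (hpos.1.eigenvectorUnitary).2
  refine ⟨U * D, ?_, ?_⟩
  · rw [Matrix.conjTranspose_mul, hDstar]
    have : U * D * (D * Uᴴ) = U * (D * D) * Uᴴ := by
      rw [Matrix.mul_assoc, Matrix.mul_assoc, Matrix.mul_assoc]
    rw [this, hDD]
    conv_rhs => rw [hpos.1.spectral_theorem]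
    rw [Unitary.conjStarAlgAut_apply]
    rfl
  · rw [Matrix.conjTranspose_mul, hDstar, Matrix.mul_assoc, ← Matrix.mul_assoc Uᴴ, hU2,
      Matrix.one_mul, hDD]

end Purify


section Subadd

variable {a b : Type*} [Fintype a] [Fintype b] [DecidableEq a] [DecidableEq b]

lemma classical_subadditivity
    (r : a → b → ℝ) (hr : ∀ i j, 0 ≤ r i j)
    (p : a → ℝ) (q : b → ℝ)
    (hp : ∀ i, p i = ∑ j, r i j) (hq : ∀ j, q j = ∑ i, r i j)
    (htot : ∑ i, p i = 1) :
    ∑ i, ∑ j, Real.negMulLog (r i j)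
      ≤ ∑ i, Real.negMulLog (p i) + ∑ j, Real.negMulLog (q j) := by
  have hqtot : ∑ j, q j = 1 := by
    rw [Finset.sum_congr rfl fun j (_ : j ∈ Finset.univ) => hq j, Finset.sum_comm, ← htot]
    exact Finset.sum_congr rfl fun i _ => (hp i).symm
  have hpn : ∀ i, 0 ≤ p i := fun i => (hp i) ▸ Finset.sum_nonneg fun j _ => hr i j
  have hqn : ∀ j, 0 ≤ q j := fun j => (hq j) ▸ Finset.sum_nonneg fun i _ => hr i j
  have hrp : ∀ i j, r i j ≤ p i := fun i j => (hp i) ▸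
    Finset.single_le_sum (fun j' _ => hr i j') (Finset.mem_univ j)
  have hrq : ∀ i j, r i j ≤ q j := fun i j => (hq j) ▸
    Finset.single_le_sum (fun i' _ => hr i' j) (Finset.mem_univ i)
  have key : ∀ i j, Real.negMulLog (r i j) + r i j * Real.log (p i) + r i j * Real.log (q j)
      ≤ p i * q j - r i j := by
    intro i j
    rcases eq_or_lt_of_le (hr i j) with h0 | h0
    · rw [← h0]
      simp only [Real.negMulLog_zero, zero_mul, add_zero, sub_zero, zero_add]
      exact mul_nonneg (hpn i) (hqn j)
    · have hpi : 0 < p i := lt_of_lt_of_le h0 (hrp i j)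
      have hqj : 0 < q j := lt_of_lt_of_le h0 (hrq i j)
      have hlog : Real.log ((p i * q j) / r i j) ≤ (p i * q j) / r i j - 1 :=
        Real.log_le_sub_one_of_pos (by positivity)
      have hexp : Real.log ((p i * q j) / r i j)
          = Real.log (p i) + Real.log (q j) - Real.log (r i j) := by
        rw [Real.log_div (by positivity) (ne_of_gt h0), Real.log_mul (ne_of_gt hpi) (ne_of_gt hqj)]
      rw [hexp] at hlog
      have hmul := mul_le_mul_of_nonneg_left hlog (le_of_lt h0)
      have hc : r i j * (p i * q j / r i j) = p i * q j := by
        field_simp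
      unfold Real.negMulLog
      nlinarith [hmul, hc]
  have hsum : ∑ i, ∑ j, (Real.negMulLog (r i j) + r i j * Real.log (p i)
        + r i j * Real.log (q j))
      ≤ ∑ i, ∑ j, (p i * q j - r i j) :=
    Finset.sum_le_sum fun i _ => Finset.sum_le_sum fun j _ => key i j
  have rhs_eq : ∑ i, ∑ j, (p i * q j - r i j) = 0 := by
    have h1 : ∑ i, ∑ j, p i * q j = 1 := by
      rw [← Finset.sum_mul_sum, htot, hqtot, one_mul]
    have h2 : ∑ i, ∑ j, r i j = 1 := by
      rw [← htot]
      exact Finset.sum_congr rfl fun i _ => (hp i).symm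
    simp only [Finset.sum_sub_distrib, h1, h2, sub_self]
  have lhs_eq : ∑ i, ∑ j, (Real.negMulLog (r i j) + r i j * Real.log (p i)
        + r i j * Real.log (q j))
      = ∑ i, ∑ j, Real.negMulLog (r i j) - ∑ i, Real.negMulLog (p i)
        - ∑ j, Real.negMulLog (q j) := by
    have e1 : ∑ i, ∑ j, r i j * Real.log (p i) = - ∑ i, Real.negMulLog (p i) := by
      rw [← Finset.sum_neg_distrib]
      refine Finset.sum_congr rfl fun i _ => ?_
      rw [← Finset.sum_mul, ← hp i, Real.negMulLog]
      ring
    have e2 : ∑ i, ∑ j, r i j * Real.log (q j) = - ∑ j, Real.negMulLog (q j) := by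
      rw [Finset.sum_comm, ← Finset.sum_neg_distrib]
      refine Finset.sum_congr rfl fun j _ => ?_
      rw [← Finset.sum_mul, ← hq j, Real.negMulLog]
      ring
    simp only [Finset.sum_add_distrib, e1, e2]
    ring
  rw [lhs_eq, rhs_eq] at hsum
  linarith

lemma sandwich_row (ρ : Matrix (a × b) (a × b) ℂ) (UA : Matrix a a ℂ) (UB : Matrix b b ℂ)
    (hUB : UB * UBᴴ = 1) :
    ptR ((Matrix.of (fun (x k : a × b) => UA x.1 k.1 * UB x.2 k.2))ᴴ * ρ *
      (Matrix.of (fun (x k : a × b) => UA x.1 k.1 * UB x.2 k.2)))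
      = UAᴴ * ptR ρ * UA := by
  set W : Matrix (a × b) (a × b) ℂ := Matrix.of (fun x k => UA x.1 k.1 * UB x.2 k.2) with hW
  ext i i'
  show ∑ j, (Wᴴ * ρ * W) (i, j) (i', j) = _
  have e1 : ∀ j, (Wᴴ * ρ * W) (i, j) (i', j)
      = ∑ x, ∑ y, star (W x (i, j)) * ρ x y * W y (i', j) := by
    intro j
    rw [Matrix.mul_apply]
    have h1 : ∀ y, (Wᴴ * ρ) (i, j) y * W y (i', j)
        = ∑ x, star (W x (i, j)) * ρ x y * W y (i', j) := by
      intro y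
      rw [Matrix.mul_apply, Finset.sum_mul]
      exact Finset.sum_congr rfl fun x _ => by rw [Matrix.conjTranspose_apply]
    rw [Finset.sum_congr rfl fun y (_ : y ∈ Finset.univ) => h1 y]
    exact Finset.sum_comm
  rw [Finset.sum_congr rfl fun j (_ : j ∈ Finset.univ) => e1 j, Finset.sum_comm]
  rw [Finset.sum_congr rfl fun x (_ : x ∈ Finset.univ) => Finset.sum_comm]
  have e2 : ∀ x y : a × b, (∑ j, star (W x (i, j)) * ρ x y * W y (i', j))
      = (star (UA x.1 i) * ρ x y * UA y.1 i') * (1 : Matrix b b ℂ) y.2 x.2 := by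
    intro x y
    have h2 : ∀ j, star (W x (i, j)) * ρ x y * W y (i', j)
        = (star (UA x.1 i) * ρ x y * UA y.1 i') * (UB y.2 j * star (UB x.2 j)) := by
      intro j
      simp only [hW, Matrix.of_apply, star_mul']
      ring
    rw [Finset.sum_congr rfl fun j (_ : j ∈ Finset.univ) => h2 j, ← Finset.mul_sum]
    congr 1
    rw [← hUB, Matrix.mul_apply]
    exact Finset.sum_congr rfl fun j _ => by rw [Matrix.conjTranspose_apply]
  rw [Finset.sum_congr rfl fun x (_ : x ∈ Finset.univ) =>
    Finset.sum_congr rfl fun y (_ : y ∈ Finset.univ) => e2 x y]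
  have e3 : ∀ x : a × b, (∑ y : a × b, (star (UA x.1 i) * ρ x y * UA y.1 i')
        * (1 : Matrix b b ℂ) y.2 x.2)
      = ∑ y1, star (UA x.1 i) * ρ x (y1, x.2) * UA y1 i' := by
    intro x
    rw [Fintype.sum_prod_type]
    refine Finset.sum_congr rfl fun y1 _ => ?_
    have h4 : ∀ y2, (star (UA x.1 i) * ρ x (y1, y2) * UA y1 i') * (1 : Matrix b b ℂ) y2 x.2
        = if y2 = x.2 then star (UA x.1 i) * ρ x (y1, y2) * UA y1 i' else 0 := by
      intro y2
      rw [Matrix.one_apply]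
      by_cases h : y2 = x.2 <;> simp [h]
    rw [Finset.sum_congr rfl fun y2 (_ : y2 ∈ Finset.univ) => h4 y2,
      Finset.sum_ite_eq' Finset.univ x.2 (fun y2 => star (UA x.1 i) * ρ x (y1, y2) * UA y1 i')]
    simp
  rw [Finset.sum_congr rfl fun x (_ : x ∈ Finset.univ) => e3 x, Fintype.sum_prod_type]
  rw [Finset.sum_congr rfl fun x1 (_ : x1 ∈ Finset.univ) => Finset.sum_comm]
  have e4 : ∀ x1 y1, (∑ x2, star (UA x1 i) * ρ (x1, x2) (y1, x2) * UA y1 i')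
      = star (UA x1 i) * ptR ρ x1 y1 * UA y1 i' := by
    intro x1 y1
    rw [← Finset.sum_mul, ← Finset.mul_sum]
    rfl
  rw [Finset.sum_congr rfl fun x1 (_ : x1 ∈ Finset.univ) =>
    Finset.sum_congr rfl fun y1 (_ : y1 ∈ Finset.univ) => e4 x1 y1]
  rw [Matrix.mul_apply]
  rw [Finset.sum_congr rfl fun y1 (_ : y1 ∈ Finset.univ) =>
    (by rw [Matrix.mul_apply, Finset.sum_mul] :
      (UAᴴ * ptR ρ) i y1 * UA y1 i' = ∑ x1, UAᴴ i x1 * ptR ρ x1 y1 * UA y1 i')]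
  rw [Finset.sum_comm]
  refine Finset.sum_congr rfl fun x1 _ => Finset.sum_congr rfl fun y1 _ => ?_
  rw [Matrix.conjTranspose_apply]

lemma sandwich_col (ρ : Matrix (a × b) (a × b) ℂ) (UA : Matrix a a ℂ) (UB : Matrix b b ℂ)
    (hUA : UA * UAᴴ = 1) :
    ptL ((Matrix.of (fun (x k : a × b) => UA x.1 k.1 * UB x.2 k.2))ᴴ * ρ *
      (Matrix.of (fun (x k : a × b) => UA x.1 k.1 * UB x.2 k.2)))
      = UBᴴ * ptL ρ * UB := by
  set W : Matrix (a × b) (a × b) ℂ := Matrix.of (fun x k => UA x.1 k.1 * UB x.2 k.2) with hW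
  ext j j'
  show ∑ i, (Wᴴ * ρ * W) (i, j) (i, j') = _
  have e1 : ∀ i, (Wᴴ * ρ * W) (i, j) (i, j')
      = ∑ x, ∑ y, star (W x (i, j)) * ρ x y * W y (i, j') := by
    intro i
    rw [Matrix.mul_apply]
    have h1 : ∀ y, (Wᴴ * ρ) (i, j) y * W y (i, j')
        = ∑ x, star (W x (i, j)) * ρ x y * W y (i, j') := by
      intro y
      rw [Matrix.mul_apply, Finset.sum_mul]
      exact Finset.sum_congr rfl fun x _ => by rw [Matrix.conjTranspose_apply]
    rw [Finset.sum_congr rfl fun y (_ : y ∈ Finset.univ) => h1 y]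
    exact Finset.sum_comm
  rw [Finset.sum_congr rfl fun i (_ : i ∈ Finset.univ) => e1 i, Finset.sum_comm]
  rw [Finset.sum_congr rfl fun x (_ : x ∈ Finset.univ) => Finset.sum_comm]
  have e2 : ∀ x y : a × b, (∑ i, star (W x (i, j)) * ρ x y * W y (i, j'))
      = (star (UB x.2 j) * ρ x y * UB y.2 j') * (1 : Matrix a a ℂ) y.1 x.1 := by
    intro x y
    have h2 : ∀ i, star (W x (i, j)) * ρ x y * W y (i, j')
        = (star (UB x.2 j) * ρ x y * UB y.2 j') * (UA y.1 i * star (UA x.1 i)) := by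
      intro i
      simp only [hW, Matrix.of_apply, star_mul']
      ring
    rw [Finset.sum_congr rfl fun i (_ : i ∈ Finset.univ) => h2 i, ← Finset.mul_sum]
    congr 1
    rw [← hUA, Matrix.mul_apply]
    exact Finset.sum_congr rfl fun i _ => by rw [Matrix.conjTranspose_apply]
  rw [Finset.sum_congr rfl fun x (_ : x ∈ Finset.univ) =>
    Finset.sum_congr rfl fun y (_ : y ∈ Finset.univ) => e2 x y]
  have e3 : ∀ x : a × b, (∑ y : a × b, (star (UB x.2 j) * ρ x y * UB y.2 j')
        * (1 : Matrix a a ℂ) y.1 x.1)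
      = ∑ y2, star (UB x.2 j) * ρ x (x.1, y2) * UB y2 j' := by
    intro x
    rw [Fintype.sum_prod_type, Finset.sum_comm]
    refine Finset.sum_congr rfl fun y2 _ => ?_
    have h4 : ∀ y1, (star (UB x.2 j) * ρ x (y1, y2) * UB y2 j') * (1 : Matrix a a ℂ) y1 x.1
        = if y1 = x.1 then star (UB x.2 j) * ρ x (y1, y2) * UB y2 j' else 0 := by
      intro y1
      rw [Matrix.one_apply]
      by_cases h : y1 = x.1 <;> simp [h]
    rw [Finset.sum_congr rfl fun y1 (_ : y1 ∈ Finset.univ) => h4 y1,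
      Finset.sum_ite_eq' Finset.univ x.1 (fun y1 => star (UB x.2 j) * ρ x (y1, y2) * UB y2 j')]
    simp
  rw [Finset.sum_congr rfl fun x (_ : x ∈ Finset.univ) => e3 x, Fintype.sum_prod_type,
    Finset.sum_comm]
  rw [Finset.sum_congr rfl fun x2 (_ : x2 ∈ Finset.univ) => Finset.sum_comm]
  have e4 : ∀ x2 y2, (∑ x1, star (UB x2 j) * ρ (x1, x2) (x1, y2) * UB y2 j')
      = star (UB x2 j) * ptL ρ x2 y2 * UB y2 j' := by
    intro x2 y2
    rw [← Finset.sum_mul, ← Finset.mul_sum]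
    rfl
  rw [Finset.sum_congr rfl fun x2 (_ : x2 ∈ Finset.univ) =>
    Finset.sum_congr rfl fun y2 (_ : y2 ∈ Finset.univ) => e4 x2 y2]
  rw [Matrix.mul_apply]
  rw [Finset.sum_congr rfl fun y2 (_ : y2 ∈ Finset.univ) =>
    (by rw [Matrix.mul_apply, Finset.sum_mul] :
      (UBᴴ * ptL ρ) j y2 * UB y2 j' = ∑ x2, UBᴴ j x2 * ptL ρ x2 y2 * UB y2 j')]
  rw [Finset.sum_comm]
  refine Finset.sum_congr rfl fun x2 _ => Finset.sum_congr rfl fun y2 _ => ?_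
  rw [Matrix.conjTranspose_apply]

/-- Subadditivity of von Neumann entropy. -/
lemma vN_subadditive (ρ : Matrix (a × b) (a × b) ℂ) (hpos : ρ.PosSemidef) (htr : ρ.trace = 1) :
    vN ρ ≤ vN (ptR ρ) + vN (ptL ρ) := by
  have hH : ρ.IsHermitian := hpos.1
  have hApsd : (ptR ρ).PosSemidef := psd_ptR hpos
  have hBpsd : (ptL ρ).PosSemidef := psd_ptL hpos
  have hA : (ptR ρ).IsHermitian := hApsd.1
  have hB : (ptL ρ).IsHermitian := hBpsd.1
  set lam : (a × b) → ℝ := hH.eigenvalues with hlamdef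
  set p : a → ℝ := hA.eigenvalues with hpdef
  set q : b → ℝ := hB.eigenvalues with hqdef
  set Cm := (hH.eigenvectorUnitary : Matrix (a × b) (a × b) ℂ) with hCmdef
  set UA := (hA.eigenvectorUnitary : Matrix a a ℂ) with hUAdef
  set UB := (hB.eigenvectorUnitary : Matrix b b ℂ) with hUBdef
  have hCm1 : Cm * Cmᴴ = 1 := by
    simpa [Matrix.star_eq_conjTranspose] using
      Matrix.mem_unitaryGroup_iff.mp (hH.eigenvectorUnitary).2
  have hCm2 : Cmᴴ * Cm = 1 := by
    simpa [Matrix.star_eq_conjTranspose] using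
      Matrix.mem_unitaryGroup_iff'.mp (hH.eigenvectorUnitary).2
  have hUA1 : UA * UAᴴ = 1 := by
    simpa [Matrix.star_eq_conjTranspose] using
      Matrix.mem_unitaryGroup_iff.mp (hA.eigenvectorUnitary).2
  have hUB1 : UB * UBᴴ = 1 := by
    simpa [Matrix.star_eq_conjTranspose] using
      Matrix.mem_unitaryGroup_iff.mp (hB.eigenvectorUnitary).2
  set W : Matrix (a × b) (a × b) ℂ := Matrix.of (fun x k => UA x.1 k.1 * UB x.2 k.2) with hWdef
  have hW1 : W * Wᴴ = 1 := by
    ext x y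
    rw [Matrix.mul_apply]
    have h0 : ∀ k : a × b, W x k * Wᴴ k y
        = (UA x.1 k.1 * star (UA y.1 k.1)) * (UB x.2 k.2 * star (UB y.2 k.2)) := by
      intro k
      rw [Matrix.conjTranspose_apply]
      simp only [hWdef, Matrix.of_apply, star_mul']
      ring
    rw [Finset.sum_congr rfl fun k (_ : k ∈ Finset.univ) => h0 k, Fintype.sum_prod_type]
    dsimp only
    rw [← Finset.sum_mul_sum]
    have e1 : (∑ k1, UA x.1 k1 * star (UA y.1 k1)) = (UA * UAᴴ) x.1 y.1 := by
      rw [Matrix.mul_apply]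
      exact Finset.sum_congr rfl fun k1 _ => by rw [Matrix.conjTranspose_apply]
    have e2 : (∑ k2, UB x.2 k2 * star (UB y.2 k2)) = (UB * UBᴴ) x.2 y.2 := by
      rw [Matrix.mul_apply]
      exact Finset.sum_congr rfl fun k2 _ => by rw [Matrix.conjTranspose_apply]
    rw [e1, e2, hUA1, hUB1]
    by_cases h : x = y
    · subst h
      rw [Matrix.one_apply_eq, Matrix.one_apply_eq, Matrix.one_apply_eq, one_mul]
    · have hne : x.1 ≠ y.1 ∨ x.2 ≠ y.2 := by
        by_contra hc
        push_neg at hc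
        exact h (Prod.ext hc.1 hc.2)
      rw [Matrix.one_apply_ne h]
      rcases hne with h1 | h2
      · rw [Matrix.one_apply_ne h1, zero_mul]
      · rw [Matrix.one_apply_ne h2, mul_zero]
  have hW2 : Wᴴ * W = 1 := by
    ext x y
    rw [Matrix.mul_apply]
    have h0 : ∀ k : a × b, Wᴴ x k * W k y
        = (star (UA k.1 x.1) * UA k.1 y.1) * (star (UB k.2 x.2) * UB k.2 y.2) := by
      intro k
      rw [Matrix.conjTranspose_apply]
      simp only [hWdef, Matrix.of_apply, star_mul']
      ring
    rw [Finset.sum_congr rfl fun k (_ : k ∈ Finset.univ) => h0 k, Fintype.sum_prod_type]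
    dsimp only
    rw [← Finset.sum_mul_sum]
    have e1 : (∑ k1, star (UA k1 x.1) * UA k1 y.1) = (UAᴴ * UA) x.1 y.1 := by
      rw [Matrix.mul_apply]
      exact Finset.sum_congr rfl fun k1 _ => by rw [Matrix.conjTranspose_apply]
    have e2 : (∑ k2, star (UB k2 x.2) * UB k2 y.2) = (UBᴴ * UB) x.2 y.2 := by
      rw [Matrix.mul_apply]
      exact Finset.sum_congr rfl fun k2 _ => by rw [Matrix.conjTranspose_apply]
    have hUA2 : UAᴴ * UA = 1 := by
      simpa [Matrix.star_eq_conjTranspose] using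
        Matrix.mem_unitaryGroup_iff'.mp (hA.eigenvectorUnitary).2
    have hUB2 : UBᴴ * UB = 1 := by
      simpa [Matrix.star_eq_conjTranspose] using
        Matrix.mem_unitaryGroup_iff'.mp (hB.eigenvectorUnitary).2
    rw [e1, e2, hUA2, hUB2]
    by_cases h : x = y
    · subst h
      rw [Matrix.one_apply_eq, Matrix.one_apply_eq, Matrix.one_apply_eq, one_mul]
    · have hne : x.1 ≠ y.1 ∨ x.2 ≠ y.2 := by
        by_contra hc
        push_neg at hc
        exact h (Prod.ext hc.1 hc.2)
      rw [Matrix.one_apply_ne h]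
      rcases hne with h1 | h2
      · rw [Matrix.one_apply_ne h1, zero_mul]
      · rw [Matrix.one_apply_ne h2, mul_zero]
  set T := Wᴴ * Cm with hTdef
  have hT1 : T * Tᴴ = 1 := by
    rw [hTdef, Matrix.conjTranspose_mul, Matrix.conjTranspose_conjTranspose,
      Matrix.mul_assoc, ← Matrix.mul_assoc Cm, hCm1, Matrix.one_mul, hW2]
  have hT2 : Tᴴ * T = 1 := by
    rw [hTdef, Matrix.conjTranspose_mul, Matrix.conjTranspose_conjTranspose,
      Matrix.mul_assoc, ← Matrix.mul_assoc W, hW1, Matrix.one_mul, hCm2]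
  set D := Matrix.diagonal (fun k => ((lam k : ℝ) : ℂ)) with hDdef
  have hspec : ρ = Cm * D * Cmᴴ := by
    conv_lhs => rw [hH.spectral_theorem]
    rw [Unitary.conjStarAlgAut_apply]
    rfl
  set G := T * D * Tᴴ with hGdef
  have hGW : G = Wᴴ * ρ * W := by
    rw [hGdef, hTdef, hspec, Matrix.conjTranspose_mul, Matrix.conjTranspose_conjTranspose]
    simp only [Matrix.mul_assoc]
  set r : a × b → ℝ := fun k => ∑ m, Complex.normSq (T k m) * lam m with hrdef
  have hGdiag : ∀ k, G k k = ((r k : ℝ) : ℂ) := by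
    intro k
    rw [hGdef, Matrix.mul_apply]
    have h0 : ∀ m, (T * D) k m * Tᴴ m k = ((Complex.normSq (T k m) * lam m : ℝ) : ℂ) := by
      intro m
      rw [hDdef, Matrix.mul_diagonal, Matrix.conjTranspose_apply]
      have : T k m * ((lam m : ℝ) : ℂ) * star (T k m)
          = (T k m * star (T k m)) * ((lam m : ℝ) : ℂ) := by ring
      rw [this, Complex.star_def, Complex.mul_conj, ← Complex.ofReal_mul]
    rw [Finset.sum_congr rfl fun m (_ : m ∈ Finset.univ) => h0 m]
    rw [hrdef]
    push_cast
    rfl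
  have hnsq_row : ∀ k, ∑ m, Complex.normSq (T k m) = 1 := by
    intro k
    have h1 : (T * Tᴴ) k k = 1 := by rw [hT1, Matrix.one_apply_eq]
    rw [Matrix.mul_apply] at h1
    have h0 : ∀ m, T k m * Tᴴ m k = ((Complex.normSq (T k m) : ℝ) : ℂ) := by
      intro m
      rw [Matrix.conjTranspose_apply, Complex.star_def, Complex.mul_conj]
    rw [Finset.sum_congr rfl fun m (_ : m ∈ Finset.univ) => h0 m] at h1
    exact_mod_cast h1
  have hnsq_col : ∀ m, ∑ k, Complex.normSq (T k m) = 1 := by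
    intro m
    have h1 : (Tᴴ * T) m m = 1 := by rw [hT2, Matrix.one_apply_eq]
    rw [Matrix.mul_apply] at h1
    have h0 : ∀ k, Tᴴ m k * T k m = ((Complex.normSq (T k m) : ℝ) : ℂ) := by
      intro k
      rw [Matrix.conjTranspose_apply, mul_comm, Complex.star_def, Complex.mul_conj]
    rw [Finset.sum_congr rfl fun k (_ : k ∈ Finset.univ) => h0 k] at h1
    exact_mod_cast h1
  have hlam_nonneg : ∀ m, 0 ≤ lam m := fun m => hpos.eigenvalues_nonneg m
  have hr_nonneg : ∀ k, 0 ≤ r k := fun k =>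
    Finset.sum_nonneg fun m _ => mul_nonneg (Complex.normSq_nonneg _) (hlam_nonneg m)
  have hlam_tot : ∑ m, lam m = 1 := by
    have h1 : ρ.trace = ((∑ m, lam m : ℝ) : ℂ) := by
      conv_lhs => rw [hspec]
      rw [Matrix.trace_mul_comm, ← Matrix.mul_assoc, hCm2, Matrix.one_mul, hDdef,
        Matrix.trace_diagonal]
      push_cast
      rfl
    rw [htr] at h1
    exact_mod_cast h1.symm
  have hrtot : ∑ k, r k = 1 := by
    rw [hrdef]
    calc ∑ k, ∑ m, Complex.normSq (T k m) * lam m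
        = ∑ m, ∑ k, Complex.normSq (T k m) * lam m := Finset.sum_comm
      _ = ∑ m, lam m := by
          refine Finset.sum_congr rfl fun m _ => ?_
          rw [← Finset.sum_mul, hnsq_col m, one_mul]
      _ = 1 := hlam_tot
  -- row and column sums
  have hdiagA : UAᴴ * ptR ρ * UA = Matrix.diagonal (fun i => ((p i : ℝ) : ℂ)) := by
    have h := hA.conjStarAlgAut_star_eigenvectorUnitary
    simp only [Unitary.conjStarAlgAut_apply, Unitary.coe_star, star_star,
      Matrix.star_eq_conjTranspose, Matrix.conjTranspose_conjTranspose] at h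
    exact h
  have hdiagB : UBᴴ * ptL ρ * UB = Matrix.diagonal (fun j => ((q j : ℝ) : ℂ)) := by
    have h := hB.conjStarAlgAut_star_eigenvectorUnitary
    simp only [Unitary.conjStarAlgAut_apply, Unitary.coe_star, star_star,
      Matrix.star_eq_conjTranspose, Matrix.conjTranspose_conjTranspose] at h
    exact h
  have hrow : ∀ i, ∑ j, r (i, j) = p i := by
    intro i
    have h1 : ((∑ j, r (i, j) : ℝ) : ℂ) = ∑ j, G (i, j) (i, j) := by
      push_cast
      exact Finset.sum_congr rfl fun j _ => (hGdiag (i, j)).symm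
    have h2 : (∑ j, G (i, j) (i, j)) = ptR G i i := rfl
    have h3 : ptR G i i = (UAᴴ * ptR ρ * UA) i i := by
      rw [hGW, hWdef]
      exact congrFun (congrFun (sandwich_row ρ UA UB hUB1) i) i
    have h4 : (UAᴴ * ptR ρ * UA) i i = ((p i : ℝ) : ℂ) := by
      rw [hdiagA, Matrix.diagonal_apply_eq]
    have := h1.trans (h2.trans (h3.trans h4))
    exact_mod_cast this
  have hcol : ∀ j, ∑ i, r (i, j) = q j := by
    intro j
    have h1 : ((∑ i, r (i, j) : ℝ) : ℂ) = ∑ i, G (i, j) (i, j) := by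
      push_cast
      exact Finset.sum_congr rfl fun i _ => (hGdiag (i, j)).symm
    have h2 : (∑ i, G (i, j) (i, j)) = ptL G j j := rfl
    have h3 : ptL G j j = (UBᴴ * ptL ρ * UB) j j := by
      rw [hGW, hWdef]
      exact congrFun (congrFun (sandwich_col ρ UA UB hUA1) j) j
    have h4 : (UBᴴ * ptL ρ * UB) j j = ((q j : ℝ) : ℂ) := by
      rw [hdiagB, Matrix.diagonal_apply_eq]
    have := h1.trans (h2.trans (h3.trans h4))
    exact_mod_cast this
  -- Jensen step
  have jensen : ∀ k, ∑ m, Complex.normSq (T k m) * Real.negMulLog (lam m)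
      ≤ Real.negMulLog (r k) := by
    intro k
    have h := Real.concaveOn_negMulLog.le_map_sum (t := Finset.univ)
      (w := fun m => Complex.normSq (T k m)) (p := lam)
      (fun m _ => Complex.normSq_nonneg _) (hnsq_row k)
      (fun m _ => hlam_nonneg m)
    simpa [smul_eq_mul] using h
  have step1 : vN ρ ≤ ∑ k, Real.negMulLog (r k) := by
    rw [vN, dif_pos hH]
    calc ∑ m, Real.negMulLog (lam m)
        = ∑ m, (∑ k, Complex.normSq (T k m)) * Real.negMulLog (lam m) := by
          refine Finset.sum_congr rfl fun m _ => ?_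
          rw [hnsq_col m, one_mul]
      _ = ∑ m, ∑ k, Complex.normSq (T k m) * Real.negMulLog (lam m) := by
          refine Finset.sum_congr rfl fun m _ => ?_
          rw [Finset.sum_mul]
      _ = ∑ k, ∑ m, Complex.normSq (T k m) * Real.negMulLog (lam m) := Finset.sum_comm
      _ ≤ ∑ k, Real.negMulLog (r k) := Finset.sum_le_sum fun k _ => jensen k
  have hptot : ∑ i, p i = 1 := by
    calc ∑ i, p i = ∑ i, ∑ j, r (i, j) :=
          Finset.sum_congr rfl fun i _ => (hrow i).symm
      _ = ∑ k, r k := (Fintype.sum_prod_type _).symm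
      _ = 1 := hrtot
  have step2 : (∑ k : a × b, Real.negMulLog (r k)) ≤ vN (ptR ρ) + vN (ptL ρ) := by
    rw [vN, dif_pos hA, vN, dif_pos hB, Fintype.sum_prod_type]
    exact classical_subadditivity (fun i j => r (i, j)) (fun i j => hr_nonneg (i, j))
      p q (fun i => (hrow i).symm) (fun j => (hcol j).symm) hptot
  linarith

end Subadd


section Triangle

variable {U V : Type*} [Fintype U] [Fintype V] [DecidableEq U] [DecidableEq V]

lemma triangle_L (ω : Matrix (U × V) (U × V) ℂ) (hpos : ω.PosSemidef) (htr : ω.trace = 1) :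
    vN (ptL ω) ≤ vN (ptR ω) + vN ω := by
  obtain ⟨P, hP1, hP2⟩ := purify hpos
  set lam := hpos.1.eigenvalues with hlam
  have hvNdiag : vN (Matrix.diagonal (fun i => ((lam i : ℝ) : ℂ))) = vN ω := by
    rw [vN_diagonal_real, vN, dif_pos hpos.1]
  set M1 : Matrix (U × (U × V)) V ℂ := Matrix.of (fun uf v => P (uf.1, v) uf.2) with hM1
  have c1 : M1ᴴ * M1 = (ptL ω)ᵀ := by
    ext v v'
    rw [Matrix.mul_apply]
    have h0 : ∀ x : U × (U × V), (M1ᴴ) v x * M1 x v'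
        = P (x.1, v') x.2 * star (P (x.1, v) x.2) := by
      intro x
      rw [Matrix.conjTranspose_apply]
      simp only [hM1, Matrix.of_apply]
      ring
    rw [Finset.sum_congr rfl fun x _ => h0 x, Fintype.sum_prod_type, Matrix.transpose_apply]
    show _ = ∑ u, ω (u, v') (u, v)
    refine Finset.sum_congr rfl fun u _ => ?_
    rw [← hP1, Matrix.mul_apply]
    rfl
  have c2 : ptR (M1 * M1ᴴ) = ptR ω := by
    ext u u'
    show ∑ f, (M1 * M1ᴴ) (u, f) (u', f) = ∑ v, ω (u, v) (u', v)
    have h1 : ∀ f, (M1 * M1ᴴ) (u, f) (u', f) = ∑ v, P (u, v) f * star (P (u', v) f) := by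
      intro f
      rw [Matrix.mul_apply]
      rfl
    have h2 : ∀ v, ω (u, v) (u', v) = ∑ f, P (u, v) f * star (P (u', v) f) := by
      intro v
      rw [← hP1, Matrix.mul_apply]
      rfl
    rw [Finset.sum_congr rfl fun f _ => h1 f, Finset.sum_congr rfl fun v _ => h2 v]
    exact Finset.sum_comm
  have c3 : ptL (M1 * M1ᴴ) = Matrix.diagonal (fun i => ((lam i : ℝ) : ℂ)) := by
    ext f f'
    show ∑ u, (M1 * M1ᴴ) (u, f) (u, f') = _
    have h1 : ∀ u, (M1 * M1ᴴ) (u, f) (u, f') = ∑ v, P (u, v) f * star (P (u, v) f') := by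
      intro u
      rw [Matrix.mul_apply]
      rfl
    rw [Finset.sum_congr rfl fun u _ => h1 u]
    have h2 : (∑ u, ∑ v, P (u, v) f * star (P (u, v) f')) = (Pᴴ * P) f' f := by
      rw [Matrix.mul_apply, Fintype.sum_prod_type]
      refine Finset.sum_congr rfl fun u _ => Finset.sum_congr rfl fun v _ => ?_
      rw [Matrix.conjTranspose_apply]
      ring
    rw [h2, hP2]
    by_cases h : f = f'
    · subst h; rfl
    · rw [Matrix.diagonal_apply_ne _ (fun hh => h hh.symm), Matrix.diagonal_apply_ne _ h]
  have c4 : (M1 * M1ᴴ).trace = 1 := by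
    rw [Matrix.trace_mul_comm, c1, Matrix.trace_transpose, trace_ptL, htr]
  have hsub := vN_subadditive (M1 * M1ᴴ) (Matrix.posSemidef_self_mul_conjTranspose M1) c4
  rw [c2, c3, hvNdiag] at hsub
  have e1 : vN (ptL ω) = vN (M1 * M1ᴴ) := by
    rw [← vN_transpose (ptL ω), ← c1, vN_conjTranspose_mul_self_comm]
  rw [e1]
  exact hsub

lemma triangle_R (ω : Matrix (U × V) (U × V) ℂ) (hpos : ω.PosSemidef) (htr : ω.trace = 1) :
    vN (ptR ω) ≤ vN (ptL ω) + vN ω := by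
  obtain ⟨P, hP1, hP2⟩ := purify hpos
  set lam := hpos.1.eigenvalues with hlam
  have hvNdiag : vN (Matrix.diagonal (fun i => ((lam i : ℝ) : ℂ))) = vN ω := by
    rw [vN_diagonal_real, vN, dif_pos hpos.1]
  set M2 : Matrix (V × (U × V)) U ℂ := Matrix.of (fun vf u => P (u, vf.1) vf.2) with hM2
  have c1 : M2ᴴ * M2 = (ptR ω)ᵀ := by
    ext u u'
    rw [Matrix.mul_apply]
    have h0 : ∀ x : V × (U × V), (M2ᴴ) u x * M2 x u'
        = P (u', x.1) x.2 * star (P (u, x.1) x.2) := by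
      intro x
      rw [Matrix.conjTranspose_apply]
      simp only [hM2, Matrix.of_apply]
      ring
    rw [Finset.sum_congr rfl fun x _ => h0 x, Fintype.sum_prod_type, Matrix.transpose_apply]
    show _ = ∑ v, ω (u', v) (u, v)
    refine Finset.sum_congr rfl fun v _ => ?_
    rw [← hP1, Matrix.mul_apply]
    rfl
  have c2 : ptR (M2 * M2ᴴ) = ptL ω := by
    ext v v'
    show ∑ f, (M2 * M2ᴴ) (v, f) (v', f) = ∑ u, ω (u, v) (u, v')
    have h1 : ∀ f, (M2 * M2ᴴ) (v, f) (v', f) = ∑ u, P (u, v) f * star (P (u, v') f) := by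
      intro f
      rw [Matrix.mul_apply]
      rfl
    have h2 : ∀ u, ω (u, v) (u, v') = ∑ f, P (u, v) f * star (P (u, v') f) := by
      intro u
      rw [← hP1, Matrix.mul_apply]
      rfl
    rw [Finset.sum_congr rfl fun f _ => h1 f, Finset.sum_congr rfl fun u _ => h2 u]
    exact Finset.sum_comm
  have c3 : ptL (M2 * M2ᴴ) = Matrix.diagonal (fun i => ((lam i : ℝ) : ℂ)) := by
    ext f f'
    show ∑ v, (M2 * M2ᴴ) (v, f) (v, f') = _
    have h1 : ∀ v, (M2 * M2ᴴ) (v, f) (v, f') = ∑ u, P (u, v) f * star (P (u, v) f') := by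
      intro v
      rw [Matrix.mul_apply]
      rfl
    rw [Finset.sum_congr rfl fun v _ => h1 v]
    have h2 : (∑ v, ∑ u, P (u, v) f * star (P (u, v) f')) = (Pᴴ * P) f' f := by
      rw [Matrix.mul_apply, Fintype.sum_prod_type, Finset.sum_comm]
      refine Finset.sum_congr rfl fun v _ => Finset.sum_congr rfl fun u _ => ?_
      rw [Matrix.conjTranspose_apply]
      ring
    rw [h2, hP2]
    by_cases h : f = f'
    · subst h; rfl
    · rw [Matrix.diagonal_apply_ne _ (fun hh => h hh.symm), Matrix.diagonal_apply_ne _ h]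
  have c4 : (M2 * M2ᴴ).trace = 1 := by
    rw [Matrix.trace_mul_comm, c1, Matrix.trace_transpose, trace_ptR, htr]
  have hsub := vN_subadditive (M2 * M2ᴴ) (Matrix.posSemidef_self_mul_conjTranspose M2) c4
  rw [c2, c3, hvNdiag] at hsub
  have e1 : vN (ptR ω) = vN (M2 * M2ᴴ) := by
    rw [← vN_transpose (ptR ω), ← c1, vN_conjTranspose_mul_self_comm]
  rw [e1]
  exact hsub

end Triangle

/-- For any extension `ω` (on `A × (E × B)`) of a bipartite state `ρ_{AB}`,
`(1/2) I(A;B|E)_ω ≤ min {H(A), H(B)}`; hence the puffed entanglement is bounded by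
`min {H(A), H(B)}`. -/
theorem half_cmi_le_min_entropy {A B : Type*} [Fintype A] [Fintype B]
    [DecidableEq A] [DecidableEq B]
    (ρ : Matrix (A × B) (A × B) ℂ) (hρ : IsState ρ)
    (E : Type*) [Fintype E] [DecidableEq E]
    (ω : Matrix (A × E × B) (A × E × B) ℂ) (hω : IsState ω)
    (hext : mOuter ω = ρ) :
    CMI ω / 2 ≤ min (vN (ptR ρ)) (vN (ptL ρ)) := by
  obtain ⟨hωpos, hωtr⟩ := hω
  set g : (A × E) × B ≃ A × E × B := Equiv.prodAssoc A E B with hg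
  -- entrywise identities
  have idR : ptR ω = ptR ρ := by
    ext i i'
    show ∑ p : E × B, ω (i, p) (i', p) = ∑ b, ρ (i, b) (i', b)
    rw [← hext]
    have h1 : ∀ b, mOuter ω (i, b) (i', b) = ∑ e, ω (i, (e, b)) (i', (e, b)) := fun b => rfl
    rw [Finset.sum_congr rfl fun b (_ : b ∈ Finset.univ) => h1 b, Fintype.sum_prod_type,
      Finset.sum_comm]
  have idmAB : mAB ω = ptR (ω.submatrix g g) := by
    ext ⟨i, e⟩ ⟨i', e'⟩
    rfl
  have idsubL : ptL (ω.submatrix g g) = ptL ρ := by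
    ext bb bb'
    show ∑ p : A × E, ω (p.1, (p.2, bb)) (p.1, (p.2, bb')) = ∑ i, ρ (i, bb) (i, bb')
    rw [← hext, Fintype.sum_prod_type]
    rfl
  have idL1 : ptR (ptL ω) = mB ω := by
    ext e e'
    show ∑ b, ∑ i, ω (i, (e, b)) (i, (e', b)) = ∑ i, ∑ b, ω (i, (e, b)) (i, (e', b))
    exact Finset.sum_comm
  have idL2 : ptL (ptL ω) = ptL ρ := by
    ext bb bb'
    show ∑ e, ∑ i, ω (i, (e, bb)) (i, (e, bb')) = ∑ i, ρ (i, bb) (i, bb')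
    rw [← hext, Finset.sum_comm]
    rfl
  have idAB_R : ptR (mAB ω) = ptR ρ := by
    ext i i'
    show ∑ e, ∑ b, ω (i, (e, b)) (i', (e, b)) = ∑ b, ρ (i, b) (i', b)
    rw [← hext, Finset.sum_comm]
    rfl
  have idAB_L : ptL (mAB ω) = mB ω := by
    ext e e'
    rfl
  -- states
  have hsubm : (ω.submatrix g g).PosSemidef := hωpos.submatrix g
  have hsubm_tr : (ω.submatrix g g).trace = 1 := by
    rw [← hωtr]
    show ∑ x, ω (g x) (g x) = ∑ y, ω y y
    exact Fintype.sum_equiv g _ _ (fun x => rfl)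
  have hmab_psd : (mAB ω).PosSemidef := by
    rw [idmAB]
    exact psd_ptR hsubm
  have hmab_tr : (mAB ω).trace = 1 := by
    rw [idmAB, trace_ptR]
    exact hsubm_tr
  -- four inequalities
  have ia : vN (mAB ω) ≤ vN (ptR ρ) + vN (mB ω) := by
    have h := vN_subadditive (mAB ω) hmab_psd hmab_tr
    rwa [idAB_R, idAB_L] at h
  have ic : vN (ptL ω) ≤ vN (mB ω) + vN (ptL ρ) := by
    have h := vN_subadditive (ptL ω) (psd_ptL hωpos) (by rw [trace_ptL, hωtr])
    rwa [idL1, idL2] at h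
  have ib : vN (ptL ω) ≤ vN (ptR ρ) + vN ω := by
    have h := triangle_L ω hωpos hωtr
    rwa [idR] at h
  have idd : vN (mAB ω) ≤ vN (ptL ρ) + vN ω := by
    have h := triangle_R (ω.submatrix g g) hsubm hsubm_tr
    rwa [← idmAB, idsubL, vN_submatrix] at h
  simp only [CMI]
  refine le_min ?_ ?_ <;> linarith

end
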